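/- Let P₁, P₂ be rank-one projectors on a finite-dimensional vector space with trace(P₁P₂) ≠ 1, and set Q_i = I - P_i, t = trace(Q₂P₁). Then 𝒫₁ = (Q₂P₁)/t and 𝒫₂ = (Q₁P₂)/t are mutually orthogonal rank-one projectors: 𝒫ᵢ² = 𝒫ᵢ and 𝒫₁𝒫₂ = 𝒫₂𝒫₁ = 0. -/

import Mathlib

open LinearMap

section Aux
variable {K V : Type*} [Field K] [AddCommGroup V] [Module K V] [FiniteDimensional K V]

omit [FiniteDimensional K V] in
lemma isProj_range' (P : V →ₗ[K] V) (hP : P ∘ₗ P = P) : IsProj (range P) P := by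
  refine ⟨fun x => mem_range_self P x, ?_⟩
  rintro x ⟨y, rfl⟩
  exact LinearMap.ext_iff.mp hP y

lemma trace_proj_one (P : V →ₗ[K] V) (hP : P ∘ₗ P = P) (rP : LinearMap.rank P = 1) :
    LinearMap.trace K V P = 1 := by
  have := (isProj_range' P hP).trace
  rw [this, Module.finrank_eq_of_rank_eq (n := 1) (by exact_mod_cast rP), Nat.cast_one]

lemma sandwich (P A : V →ₗ[K] V) (hP : P ∘ₗ P = P) (rP : LinearMap.rank P = 1) :
    P ∘ₗ A ∘ₗ P = (LinearMap.trace K V (A ∘ₗ P)) • P := by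
  obtain ⟨v₀, hv₀, hv⟩ := rank_eq_one_iff.mp (rP : Module.rank K (range P) = 1)
  have hPmem : ∀ x : V, ∃ c : K, c • (v₀ : V) = P x := by
    intro x
    obtain ⟨c, hc⟩ := hv ⟨P x, mem_range_self P x⟩
    exact ⟨c, by simpa [Subtype.ext_iff] using hc⟩
  obtain ⟨d, hd⟩ := hPmem (A v₀)
  have key : P ∘ₗ A ∘ₗ P = d • P := by
    ext x
    obtain ⟨c, hc⟩ := hPmem x
    have hPv : P (v₀ : V) = v₀ := (isProj_range' P hP).map_id _ v₀.2
    simp only [comp_apply, LinearMap.smul_apply, ← hc, map_smul, hd.symm]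
    rw [smul_comm]
  have htr : LinearMap.trace K V (A ∘ₗ P) = d := by
    have h1 := LinearMap.trace_mul_comm K P (A ∘ₗ P)
    simp only [Module.End.mul_eq_comp, comp_assoc, hP] at h1
    rw [← h1, key, map_smul, trace_proj_one P hP rP, smul_eq_mul, mul_one]
  rw [htr, key]

lemma rank_eq_one_of_proj (P : V →ₗ[K] V) (hP : P ∘ₗ P = P)
    (htr : LinearMap.trace K V P = (1 : K)) (hinj : ∀ n : ℕ, ((n : K) = 1) → n = 1) : LinearMap.rank P = 1 := by
  have h := (isProj_range' P hP).trace
  rw [htr] at h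
  have hfr : Module.finrank K ↥(range P) = 1 := hinj _ h.symm
  rw [show LinearMap.rank P = Module.rank K ↥(range P) from rfl,
    ← Submodule.finrank_eq_rank, hfr, Nat.cast_one]

end Aux

/-- For rank-one projectors `P₁`, `P₂` with `t = trace ((I - P₂) ∘ P₁) ≠ 0`,
the maps `𝒫₁ = t⁻¹ • ((I - P₂) ∘ P₁)` and `𝒫₂ = t⁻¹ • ((I - P₁) ∘ P₂)` are
mutually orthogonal rank-one projectors. -/
theorem orthogonal_rank_one_projectors {K V : Type*} [Field K] [CharZero K] [AddCommGroup V]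
    [Module K V] [FiniteDimensional K V] (P₁ P₂ : V →ₗ[K] V)
    (h₁ : P₁ ∘ₗ P₁ = P₁) (h₂ : P₂ ∘ₗ P₂ = P₂)
    (r₁ : LinearMap.rank P₁ = 1) (r₂ : LinearMap.rank P₂ = 1)
    (t : K) (ht : t = LinearMap.trace K V ((LinearMap.id - P₂) ∘ₗ P₁)) (htne : t ≠ 0) :
    let 𝒫₁ : V →ₗ[K] V := t⁻¹ • ((LinearMap.id - P₂) ∘ₗ P₁)
    let 𝒫₂ : V →ₗ[K] V := t⁻¹ • ((LinearMap.id - P₁) ∘ₗ P₂)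
    (𝒫₁ ∘ₗ 𝒫₁ = 𝒫₁) ∧ (𝒫₂ ∘ₗ 𝒫₂ = 𝒫₂) ∧ (LinearMap.rank 𝒫₁ = 1) ∧ (LinearMap.rank 𝒫₂ = 1) ∧
      (𝒫₁ ∘ₗ 𝒫₂ = 0) ∧ (𝒫₂ ∘ₗ 𝒫₁ = 0) := by
  intro 𝒫₁ 𝒫₂
  set Q₁ : V →ₗ[K] V := LinearMap.id - P₁ with hQ₁
  set Q₂ : V →ₗ[K] V := LinearMap.id - P₂ with hQ₂
  -- trace of the other cross term equals t
  have htr12 : LinearMap.trace K V (Q₁ ∘ₗ P₂) = t := by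
    have e1 : Q₁ ∘ₗ P₂ = P₂ - P₁ ∘ₗ P₂ := by
      rw [hQ₁, sub_comp, id_comp]
    have e2 : Q₂ ∘ₗ P₁ = P₁ - P₂ ∘ₗ P₁ := by
      rw [hQ₂, sub_comp, id_comp]
    have hcomm := LinearMap.trace_mul_comm K P₁ P₂
    simp only [Module.End.mul_eq_comp] at hcomm
    rw [e1, map_sub, trace_proj_one P₂ h₂ r₂, hcomm, ht, e2, map_sub,
      trace_proj_one P₁ h₁ r₁]
  -- sandwich identities
  have s1 : P₁ ∘ₗ Q₂ ∘ₗ P₁ = t • P₁ := by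
    rw [sandwich P₁ Q₂ h₁ r₁, ← ht]
  have s2 : P₂ ∘ₗ Q₁ ∘ₗ P₂ = t • P₂ := by
    rw [sandwich P₂ Q₁ h₂ r₂, htr12]
  -- zero compositions
  have z1 : P₁ ∘ₗ Q₁ = 0 := by rw [hQ₁, comp_sub, comp_id, h₁, sub_self]
  have z2 : P₂ ∘ₗ Q₂ = 0 := by rw [hQ₂, comp_sub, comp_id, h₂, sub_self]
  have idem1 : 𝒫₁ ∘ₗ 𝒫₁ = 𝒫₁ := by
    show (t⁻¹ • (Q₂ ∘ₗ P₁)) ∘ₗ (t⁻¹ • (Q₂ ∘ₗ P₁)) = t⁻¹ • (Q₂ ∘ₗ P₁)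
    simp only [smul_comp, comp_smul, comp_assoc]
    rw [s1, comp_smul, smul_smul, smul_smul, mul_assoc, inv_mul_cancel₀ htne, mul_one]
  have idem2 : 𝒫₂ ∘ₗ 𝒫₂ = 𝒫₂ := by
    show (t⁻¹ • (Q₁ ∘ₗ P₂)) ∘ₗ (t⁻¹ • (Q₁ ∘ₗ P₂)) = t⁻¹ • (Q₁ ∘ₗ P₂)
    simp only [smul_comp, comp_smul, comp_assoc]
    rw [s2, comp_smul, smul_smul, smul_smul, mul_assoc, inv_mul_cancel₀ htne, mul_one]
  have tr1 : LinearMap.trace K V 𝒫₁ = 1 := by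
    show LinearMap.trace K V (t⁻¹ • (Q₂ ∘ₗ P₁)) = 1
    rw [map_smul, ← ht, smul_eq_mul, inv_mul_cancel₀ htne]
  have tr2 : LinearMap.trace K V 𝒫₂ = 1 := by
    show LinearMap.trace K V (t⁻¹ • (Q₁ ∘ₗ P₂)) = 1
    rw [map_smul, htr12, smul_eq_mul, inv_mul_cancel₀ htne]
  have rk1 : LinearMap.rank 𝒫₁ = 1 :=
    rank_eq_one_of_proj 𝒫₁ idem1 tr1 (fun n h => by exact_mod_cast h)
  have rk2 : LinearMap.rank 𝒫₂ = 1 :=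
    rank_eq_one_of_proj 𝒫₂ idem2 tr2 (fun n h => by exact_mod_cast h)
  have o12 : 𝒫₁ ∘ₗ 𝒫₂ = 0 := by
    show (t⁻¹ • (Q₂ ∘ₗ P₁)) ∘ₗ (t⁻¹ • (Q₁ ∘ₗ P₂)) = 0
    simp only [smul_comp, comp_smul, comp_assoc]
    rw [← comp_assoc P₂ Q₁ P₁, z1, zero_comp, comp_zero, smul_zero, smul_zero]
  have o21 : 𝒫₂ ∘ₗ 𝒫₁ = 0 := by
    show (t⁻¹ • (Q₁ ∘ₗ P₂)) ∘ₗ (t⁻¹ • (Q₂ ∘ₗ P₁)) = 0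
    simp only [smul_comp, comp_smul, comp_assoc]
    rw [← comp_assoc P₁ Q₂ P₂, z2, zero_comp, comp_zero, smul_zero, smul_zero]
  exact ⟨idem1, idem2, rk1, rk2, o12, o21⟩
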